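/- Let F = (f_1,…,f_N), N ≥ 2, be a uniform tight frame with bound A > 0 for an n-dimensional complex inner product space H, and assume |⟨f_i,f_j⟩| is the same for all pairs i ≠ j. Let p ≥ 2 and let G = (g_1,…,g_N) be a dual frame of F whose 1-erasure Frobenius average error satisfies ((1/N)∑_{i=1}^N (‖f_i‖·‖g_i‖)^p)^{1/p} = n/N. Then for every 1 ≤ m ≤ N, the m-erasure Frobenius average error satisfies AE_F^{(m),p}(F,G) ≥ sqrt( m·(n/N)² + m(m−1)(nN − n²)/(N²(N−1)) ). -/

import Mathlib

open scoped ComplexInnerProductSpace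

open Finset
open scoped ComplexInnerProductSpace

section aux

lemma countA' {α : Type*} [DecidableEq α] (s : Finset α) (m : ℕ) (j : α)
    (hj : j ∈ s) (hm : 1 ≤ m) :
    ((s.powersetCard m).filter (fun Λ => j ∈ Λ)).card = (s.card - 1).choose (m - 1) := by
  have : ((s.powersetCard m).filter (fun Λ => j ∈ Λ)).card
      = ((s.erase j).powersetCard (m - 1)).card := by
    refine Finset.card_bij' (fun Λ _ => Λ.erase j) (fun Λ' _ => insert j Λ') ?hi ?hjj ?li ?ri
    case hi =>
      intro Λ hΛ
      simp only [mem_filter, mem_powersetCard] at hΛ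
      obtain ⟨⟨hsub, hcard⟩, hjΛ⟩ := hΛ
      simp only [mem_powersetCard]
      exact ⟨erase_subset_erase _ hsub, by rw [card_erase_of_mem hjΛ, hcard]⟩
    case hjj =>
      intro Λ' hΛ'
      simp only [mem_powersetCard] at hΛ'
      obtain ⟨hsub, hcard⟩ := hΛ'
      have hjΛ' : j ∉ Λ' := fun h => (mem_erase.1 (hsub h)).1 rfl
      have hjs : Λ' ⊆ s := hsub.trans (erase_subset _ _)
      simp only [mem_filter, mem_powersetCard]
      refine ⟨⟨insert_subset hj hjs, ?_⟩, mem_insert_self _ _⟩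
      rw [card_insert_of_notMem hjΛ', hcard, Nat.sub_add_cancel hm]
    case li =>
      intro Λ hΛ
      simp only [mem_filter] at hΛ
      exact insert_erase hΛ.2
    case ri =>
      intro Λ' hΛ'
      simp only [mem_powersetCard] at hΛ'
      have hjΛ' : j ∉ Λ' := fun h => (mem_erase.1 (hΛ'.1 h)).1 rfl
      exact erase_insert hjΛ'
  rw [this, card_powersetCard, card_erase_of_mem hj]

lemma countB' {α : Type*} [DecidableEq α] (s : Finset α) (m : ℕ) (j k : α)
    (hjk : j ≠ k) (hj : j ∈ s) (hk : k ∈ s) (hm : 2 ≤ m) :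
    ((s.powersetCard m).filter (fun Λ => j ∈ Λ ∧ k ∈ Λ)).card
      = (s.card - 2).choose (m - 2) := by
  have step : ((s.powersetCard m).filter (fun Λ => j ∈ Λ ∧ k ∈ Λ)).card
      = (((s.erase j).powersetCard (m - 1)).filter (fun Λ' => k ∈ Λ')).card := by
    refine Finset.card_bij' (fun Λ _ => Λ.erase j) (fun Λ' _ => insert j Λ') ?hi ?hjj ?li ?ri
    case hi =>
      intro Λ hΛ
      simp only [mem_filter, mem_powersetCard] at hΛ
      obtain ⟨⟨hsub, hcard⟩, hjΛ, hkΛ⟩ := hΛ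
      simp only [mem_filter, mem_powersetCard]
      exact ⟨⟨erase_subset_erase _ hsub, by rw [card_erase_of_mem hjΛ, hcard]⟩,
        mem_erase.2 ⟨fun h => hjk h.symm, hkΛ⟩⟩
    case hjj =>
      intro Λ' hΛ'
      simp only [mem_filter, mem_powersetCard] at hΛ'
      obtain ⟨⟨hsub, hcard⟩, hkΛ'⟩ := hΛ'
      have hjΛ' : j ∉ Λ' := fun h => (mem_erase.1 (hsub h)).1 rfl
      have hjs : Λ' ⊆ s := hsub.trans (erase_subset _ _)
      simp only [mem_filter, mem_powersetCard]
      refine ⟨⟨insert_subset hj hjs, ?_⟩, mem_insert_self _ _, mem_insert_of_mem hkΛ'⟩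
      rw [card_insert_of_notMem hjΛ', hcard, Nat.sub_add_cancel (le_trans one_le_two hm)]
    case li =>
      intro Λ hΛ
      simp only [mem_filter] at hΛ
      exact insert_erase hΛ.2.1
    case ri =>
      intro Λ' hΛ'
      simp only [mem_filter, mem_powersetCard] at hΛ'
      have hjΛ' : j ∉ Λ' := fun h => (mem_erase.1 (hΛ'.1.1 h)).1 rfl
      exact erase_insert hjΛ'
  rw [step, countA' (s.erase j) (m-1) k (mem_erase.2 ⟨fun h => hjk h.symm, hk⟩) (by omega),
    card_erase_of_mem hj]
  congr 1 <;> omega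

lemma countB1' {α : Type*} [DecidableEq α] (s : Finset α) (j k : α) (hjk : j ≠ k) :
    ((s.powersetCard 1).filter (fun Λ => j ∈ Λ ∧ k ∈ Λ)).card = 0 := by
  rw [card_eq_zero, filter_eq_empty_iff]
  intro Λ hΛ
  simp only [mem_powersetCard] at hΛ
  rintro ⟨hjΛ, hkΛ⟩
  exact hjk (card_le_one.1 hΛ.2.le _ hjΛ _ hkΛ)

lemma swap_sum' {ι : Type*} [Fintype ι] [DecidableEq ι] (m : ℕ) (T : ι → ι → ℝ) :
    ∑ Λ ∈ powersetCard m (univ : Finset ι), ∑ j ∈ Λ, ∑ k ∈ Λ, T j k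
      = ∑ j, ∑ k,
        (((powersetCard m (univ : Finset ι)).filter (fun Λ => j ∈ Λ ∧ k ∈ Λ)).card : ℝ)
          * T j k := by
  have e1 : ∀ (Λ : Finset ι) (h : ι → ℝ), ∑ j ∈ Λ, h j = ∑ j, if j ∈ Λ then h j else 0 :=
    fun Λ h => by rw [Finset.sum_ite_mem, Finset.univ_inter]
  have e2 : ∀ Λ : Finset ι, ∑ j ∈ Λ, ∑ k ∈ Λ, T j k
      = ∑ j, ∑ k, if j ∈ Λ ∧ k ∈ Λ then T j k else 0 := by
    intro Λ
    rw [e1 Λ (fun j => ∑ k ∈ Λ, T j k)]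
    refine Finset.sum_congr rfl fun j _ => ?_
    split_ifs with hj
    · rw [e1 Λ (T j)]
      exact Finset.sum_congr rfl fun k _ => by simp [hj]
    · simp [hj]
  calc ∑ Λ ∈ powersetCard m (univ : Finset ι), ∑ j ∈ Λ, ∑ k ∈ Λ, T j k
      = ∑ Λ ∈ powersetCard m (univ : Finset ι), ∑ j, ∑ k,
          if j ∈ Λ ∧ k ∈ Λ then T j k else 0 := Finset.sum_congr rfl fun Λ _ => e2 Λ
    _ = ∑ j, ∑ k, ∑ Λ ∈ powersetCard m (univ : Finset ι),
          if j ∈ Λ ∧ k ∈ Λ then T j k else 0 := by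
        rw [Finset.sum_comm]
        exact Finset.sum_congr rfl fun j _ => Finset.sum_comm
    _ = _ := by
        refine Finset.sum_congr rfl fun j _ => Finset.sum_congr rfl fun k _ => ?_
        rw [← Finset.sum_filter, Finset.sum_const, nsmul_eq_mul]

lemma chooseA' {N m : ℕ} (hm : 1 ≤ m) (hN : 1 ≤ N) :
    N * (N - 1).choose (m - 1) = N.choose m * m := by
  obtain ⟨N', rfl⟩ : ∃ N', N = N' + 1 := ⟨N - 1, by omega⟩
  obtain ⟨m', rfl⟩ : ∃ m', m = m' + 1 := ⟨m - 1, by omega⟩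
  simpa using Nat.add_one_mul_choose_eq N' m'

lemma chooseB' {N m : ℕ} (hm : 2 ≤ m) (hN : 2 ≤ N) :
    (N * (N - 1)) * (N - 2).choose (m - 2) = N.choose m * (m * (m - 1)) := by
  have h1 : (N - 1) * (N - 2).choose (m - 2) = (N - 1).choose (m - 1) * (m - 1) := by
    have := chooseA' (N := N - 1) (m := m - 1) (by omega) (by omega)
    simpa [Nat.sub_sub] using this
  have h2 := chooseA' (N := N) (m := m) (by omega) (by omega)
  calc (N * (N - 1)) * (N - 2).choose (m - 2) = N * ((N-1) * (N-2).choose (m-2)) := by ring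
    _ = N * ((N - 1).choose (m - 1) * (m - 1)) := by rw [h1]
    _ = (N * (N - 1).choose (m - 1)) * (m - 1) := by ring
    _ = N.choose m * m * (m - 1) := by rw [h2]
    _ = _ := by ring

lemma S_eq_sum_sq {H : Type*} [NormedAddCommGroup H] [InnerProductSpace ℂ H]
    [FiniteDimensional ℂ H] {N : ℕ} (f g : Fin N → H) (Λ : Finset (Fin N))
    (b : OrthonormalBasis (Fin (Module.finrank ℂ H)) ℂ H) :
    ∑ j ∈ Λ, ∑ k ∈ Λ, ⟪g k, g j⟫ * ⟪f j, f k⟫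
      = ∑ s, ⟪∑ j ∈ Λ, ⟪g j, b s⟫ • f j, ∑ k ∈ Λ, ⟪g k, b s⟫ • f k⟫ := by
  have e : ∀ s, ⟪∑ j ∈ Λ, ⟪g j, b s⟫ • f j, ∑ k ∈ Λ, ⟪g k, b s⟫ • f k⟫
      = ∑ j ∈ Λ, ∑ k ∈ Λ, ⟪b s, g j⟫ * ⟪g k, b s⟫ * ⟪f j, f k⟫ := by
    intro s
    rw [sum_inner]
    refine Finset.sum_congr rfl fun j _ => ?_
    rw [inner_sum]
    refine Finset.sum_congr rfl fun k _ => ?_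
    rw [inner_smul_left, inner_smul_right, ← inner_conj_symm (b s) (g j)]
    ring
  calc ∑ j ∈ Λ, ∑ k ∈ Λ, ⟪g k, g j⟫ * ⟪f j, f k⟫
      = ∑ j ∈ Λ, ∑ k ∈ Λ, ∑ s, ⟪b s, g j⟫ * ⟪g k, b s⟫ * ⟪f j, f k⟫ := by
        refine Finset.sum_congr rfl fun j _ => Finset.sum_congr rfl fun k _ => ?_
        rw [← b.sum_inner_mul_inner (g k) (g j), Finset.sum_mul]
        exact Finset.sum_congr rfl fun s _ => by ring
    _ = ∑ j ∈ Λ, ∑ s, ∑ k ∈ Λ, ⟪b s, g j⟫ * ⟪g k, b s⟫ * ⟪f j, f k⟫ :=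
        Finset.sum_congr rfl fun j _ => Finset.sum_comm
    _ = ∑ s, ∑ j ∈ Λ, ∑ k ∈ Λ, ⟪b s, g j⟫ * ⟪g k, b s⟫ * ⟪f j, f k⟫ := Finset.sum_comm
    _ = _ := Finset.sum_congr rfl fun s _ => (e s).symm

lemma trace_eq {H : Type*} [NormedAddCommGroup H] [InnerProductSpace ℂ H]
    [FiniteDimensional ℂ H] {N : ℕ} (f g : Fin N → H)
    (b : OrthonormalBasis (Fin (Module.finrank ℂ H)) ℂ H)
    (hdual : ∀ x : H, x = ∑ i, ⟪f i, x⟫ • g i) :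
    ∑ i, ⟪f i, g i⟫ = (Module.finrank ℂ H : ℂ) := by
  have h1 : ∀ s, ⟪b s, b s⟫ = ∑ i, ⟪f i, b s⟫ * ⟪b s, g i⟫ := by
    intro s
    have h := congrArg (fun y => ⟪b s, y⟫) (hdual (b s))
    have h : ⟪b s, b s⟫ = ⟪b s, ∑ i, ⟪f i, b s⟫ • g i⟫ := h
    rw [h, inner_sum]
    exact Finset.sum_congr rfl fun i _ => by rw [inner_smul_right]
  have h2 : ∑ s, ⟪b s, b s⟫ = (Module.finrank ℂ H : ℂ) := by
    have hone : ∀ s, ⟪b s, b s⟫ = (1 : ℂ) := fun s => by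
      simpa using (orthonormal_iff_ite.mp b.orthonormal) s s
    simp [hone]
  rw [← h2, Finset.sum_congr rfl fun s _ => h1 s, Finset.sum_comm]
  exact Finset.sum_congr rfl fun i _ => (b.sum_inner_mul_inner (f i) (g i)).symm

lemma dual_swap {H : Type*} [NormedAddCommGroup H] [InnerProductSpace ℂ H]
    {N : ℕ} (f g : Fin N → H)
    (hdual : ∀ x : H, x = ∑ i, ⟪f i, x⟫ • g i) (y : H) :
    ∑ i, ⟪g i, y⟫ • f i = y := by
  apply ext_inner_right ℂ
  intro x
  rw [sum_inner]
  conv_rhs => rw [hdual x]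
  rw [inner_sum]
  refine Finset.sum_congr rfl fun i _ => ?_
  rw [inner_smul_left, inner_smul_right, ← inner_conj_symm y (g i)]
  ring

end aux

/-- Let `F = (f₁,…,f_N)`, `N ≥ 2`, be a uniform tight frame with
bound `A > 0` for an `n`-dimensional complex inner product space `H`, with
`|⟨f i, f j⟩|` constant over pairs `i ≠ j`.  Let `p ≥ 2` and let `G` be a dual
frame of `F` whose `1`-erasure Frobenius average error equals `n/N`.  Then for
every `1 ≤ m ≤ N`, the `m`-erasure Frobenius average error satisfies
`AE_F^{(m),p}(F,G) ≥ √( m (n/N)² + m(m−1)(nN − n²)/(N²(N−1)) )`. -/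
theorem stmt_8 {H : Type*} [NormedAddCommGroup H] [InnerProductSpace ℂ H]
    [FiniteDimensional ℂ H] (n N : ℕ) (hn : Module.finrank ℂ H = n)
    (hN : 2 ≤ N) (f : Fin N → H) (A : ℝ) (hA : 0 < A)
    (htight : ∀ x : H, ∑ i, ‖⟪f i, x⟫‖ ^ 2 = A * ‖x‖ ^ 2)
    (huniform : ∀ i j, ‖f i‖ = ‖f j‖)
    (hequi : ∃ c : ℝ, ∀ i j, i ≠ j → ‖⟪f i, f j⟫‖ = c)
    (p : ℝ) (hp : 2 ≤ p)
    (g : Fin N → H)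
    (hdual : ∀ x : H, x = ∑ i, ⟪f i, x⟫ • g i)
    (hopt : ((1 / (N : ℝ)) * ∑ i, (‖f i‖ * ‖g i‖) ^ p) ^ (1 / p) = (n : ℝ) / N)
    (m : ℕ) (hm1 : 1 ≤ m) (hmN : m ≤ N) :
    Real.sqrt ((m : ℝ) * ((n : ℝ) / N) ^ 2 +
        (m : ℝ) * ((m : ℝ) - 1) * ((n : ℝ) * N - (n : ℝ) ^ 2) /
          ((N : ℝ) ^ 2 * ((N : ℝ) - 1))) ≤
      ((1 / (N.choose m : ℝ)) *
        ∑ Λ ∈ Finset.powersetCard m (Finset.univ : Finset (Fin N)),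
          ((∑ j ∈ Λ, ∑ k ∈ Λ, ⟪g k, g j⟫ * ⟪f j, f k⟫).re) ^ (p / 2)) ^ (1 / p) := by
  classical
  have hN0 : (0:ℝ) < (N:ℝ) := by positivity
  have hN1 : (0:ℝ) < (N:ℝ) - 1 := by
    have : (2:ℝ) ≤ (N:ℝ) := by exact_mod_cast hN
    linarith
  have hm0 : (1:ℝ) ≤ (m:ℝ) := by exact_mod_cast hm1
  have hmN' : (m:ℝ) ≤ (N:ℝ) := by exact_mod_cast hmN
  set b : OrthonormalBasis (Fin (Module.finrank ℂ H)) ℂ H := stdOrthonormalBasis ℂ H with hb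
  set S : Finset (Fin N) → ℝ := fun Λ => (∑ j ∈ Λ, ∑ k ∈ Λ, ⟪g k, g j⟫ * ⟪f j, f k⟫).re
    with hSdef
  set T : Fin N → Fin N → ℝ := fun j k => (⟪g k, g j⟫ * ⟪f j, f k⟫).re with hTdef
  have hinner_self : ∀ x : H, ⟪x, x⟫ = ((‖x‖ ^ 2 : ℝ) : ℂ) := fun x => by
    rw [inner_self_eq_norm_sq_to_K]; norm_cast
  have hS_sq : ∀ Λ, S Λ = ∑ s, ‖∑ j ∈ Λ, ⟪g j, b s⟫ • f j‖ ^ 2 := by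
    intro Λ
    rw [hSdef]
    simp only
    rw [S_eq_sum_sq f g Λ b, Complex.re_sum]
    exact Finset.sum_congr rfl fun s _ => by
      rw [hinner_self, Complex.ofReal_re]
  have hS_nonneg : ∀ Λ, 0 ≤ S Λ := fun Λ => by
    rw [hS_sq Λ]; positivity
  have hS_T : ∀ Λ, S Λ = ∑ j ∈ Λ, ∑ k ∈ Λ, T j k := by
    intro Λ
    rw [hSdef]
    simp only [Complex.re_sum]
    rfl
  have hS_univ : S Finset.univ = (n : ℝ) := by
    rw [hS_sq]
    have h1 : ∀ s, ∑ j, ⟪g j, b s⟫ • f j = b s := fun s => dual_swap f g hdual (b s)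
    simp only [h1]
    have h2 : ∀ s : Fin (Module.finrank ℂ H), ‖b s‖ ^ 2 = (1:ℝ) := fun s => by
      rw [b.orthonormal.1 s]; norm_num
    rw [Finset.sum_congr rfl fun s _ => h2 s]
    simp [hn]
  -- diagonal quantity
  set D : ℝ := ∑ i, T i i with hDdef
  have hT_diag : ∀ i, T i i = (‖f i‖ * ‖g i‖) ^ 2 := by
    intro i
    rw [hTdef]
    simp only
    rw [hinner_self, hinner_self, ← Complex.ofReal_mul, Complex.ofReal_re]
    ring
  have htrace : ∑ i, ⟪f i, g i⟫ = (n : ℂ) := by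
    rw [trace_eq f g b hdual, hn]
  have hDlow : (n : ℝ) ^ 2 ≤ (N : ℝ) * D := by
    have h1 : (n : ℝ) = (∑ i, ⟪f i, g i⟫).re := by rw [htrace]; simp
    have h2 : (n : ℝ) ≤ ∑ i, ‖f i‖ * ‖g i‖ := by
      rw [h1, Complex.re_sum]
      refine Finset.sum_le_sum fun i _ => ?_
      calc (⟪f i, g i⟫).re ≤ ‖⟪f i, g i⟫‖ := by
            exact Complex.re_le_norm _
        _ ≤ ‖f i‖ * ‖g i‖ := norm_inner_le_norm _ _
    have h3 : (∑ i, ‖f i‖ * ‖g i‖) ^ 2 ≤ (N : ℝ) * ∑ i, (‖f i‖ * ‖g i‖) ^ 2 := by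
      have := sq_sum_le_card_mul_sum_sq (s := (Finset.univ : Finset (Fin N)))
        (f := fun i => ‖f i‖ * ‖g i‖)
      simpa using this
    have h4 : D = ∑ i, (‖f i‖ * ‖g i‖) ^ 2 := Finset.sum_congr rfl fun i _ => hT_diag i
    have h5 : (0:ℝ) ≤ (n:ℝ) := Nat.cast_nonneg n
    nlinarith
  -- the combinatorial average
  set C : ℝ := (N.choose m : ℝ) with hCdef
  have hC : 0 < C := by
    rw [hCdef]
    exact_mod_cast Nat.choose_pos hmN
  set P := Finset.powersetCard m (Finset.univ : Finset (Fin N)) with hP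
  set SS : ℝ := ∑ Λ ∈ P, S Λ with hSS
  set a : ℝ := ((N-1).choose (m-1) : ℝ) with hadef
  set κ : ℝ := if m = 1 then 0 else (((N-2).choose (m-2) : ℕ) : ℝ) with hκdef
  set OD : ℝ := ∑ j, ∑ k ∈ Finset.univ.erase j, T j k with hOD
  have hcard_univ : (Finset.univ : Finset (Fin N)).card = N := by simp
  have hcdiag : ∀ j : Fin N, ((P.filter (fun Λ => j ∈ Λ ∧ j ∈ Λ)).card : ℝ) = a := by
    intro j
    have : (P.filter (fun Λ => j ∈ Λ ∧ j ∈ Λ)) = (P.filter (fun Λ => j ∈ Λ)) := by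
      apply Finset.filter_congr; intro Λ _; simp
    rw [this, hP, countA' _ m j (Finset.mem_univ j) hm1, hcard_univ, hadef]
  have hcoff : ∀ j k : Fin N, j ≠ k → ((P.filter (fun Λ => j ∈ Λ ∧ k ∈ Λ)).card : ℝ) = κ := by
    intro j k hjk
    rcases eq_or_lt_of_le hm1 with h1 | h2
    · rw [hκdef, if_pos h1.symm, hP, ← h1, countB1' _ j k hjk]
      norm_num
    · have hm2 : 2 ≤ m := h2
      rw [hκdef, if_neg (by omega), hP, countB' _ m j k hjk (Finset.mem_univ j)
        (Finset.mem_univ k) hm2, hcard_univ]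
  have hSS_eq : SS = a * D + κ * OD := by
    rw [hSS, Finset.sum_congr rfl fun Λ _ => hS_T Λ, swap_sum' m T]
    have hsplit : ∀ j : Fin N, (∑ k, ((P.filter (fun Λ => j ∈ Λ ∧ k ∈ Λ)).card : ℝ) * T j k)
        = a * T j j + κ * ∑ k ∈ Finset.univ.erase j, T j k := by
      intro j
      rw [← Finset.sum_erase_add _ _ (Finset.mem_univ j), hcdiag j, Finset.mul_sum]
      rw [Finset.sum_congr rfl fun k hk => by
        rw [hcoff j k (Ne.symm (Finset.ne_of_mem_erase hk))]]
      ring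
    rw [Finset.sum_congr rfl fun j _ => hsplit j, Finset.sum_add_distrib, ← Finset.mul_sum,
      ← Finset.mul_sum, ← hDdef, ← hOD]
  have hDOD : D + OD = (n : ℝ) := by
    rw [← hS_univ, hS_T, hDdef, hOD, ← Finset.sum_add_distrib]
    exact (Finset.sum_congr rfl fun j _ => by
      rw [add_comm, Finset.sum_erase_add _ _ (Finset.mem_univ j)]).symm
  have ha : a * N = C * m := by
    rw [hadef, hCdef]
    have := chooseA' hm1 (by omega : 1 ≤ N)
    exact_mod_cast by
      have := congrArg (fun t : ℕ => (t : ℝ)) this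
      push_cast at this
      linarith [this]
  have hκ : κ * ((N:ℝ) * ((N:ℝ) - 1)) = C * ((m:ℝ) * ((m:ℝ) - 1)) := by
    rcases eq_or_lt_of_le hm1 with h1 | h2
    · rw [hκdef, if_pos h1.symm, ← h1]
      norm_num
    · have hm2 : 2 ≤ m := h2
      rw [hκdef, if_neg (by omega), hCdef]
      have hnat := chooseB' hm2 hN
      have hcast := congrArg (fun t : ℕ => (t : ℝ)) hnat
      push_cast [Nat.cast_sub (by omega : 1 ≤ N), Nat.cast_sub (by omega : 1 ≤ m)] at hcast
      linarith [hcast]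
  have hkey : SS * ((N:ℝ) * ((N:ℝ) - 1)) =
      C * ((m:ℝ) * ((N:ℝ) - 1)) * D + C * ((m:ℝ) * ((m:ℝ) - 1)) * ((n:ℝ) - D) := by
    have hODval : OD = (n:ℝ) - D := by linarith [hDOD]
    calc SS * ((N:ℝ) * ((N:ℝ) - 1))
        = (a * N) * (((N:ℝ) - 1) * D) + (κ * ((N:ℝ) * ((N:ℝ) - 1))) * OD := by
          rw [hSS_eq]; ring
      _ = (C * m) * (((N:ℝ) - 1) * D) + (C * ((m:ℝ) * ((m:ℝ) - 1))) * ((n:ℝ) - D) := by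
          rw [ha, hκ, hODval]
      _ = _ := by ring
  -- target ≤ average
  have havg : (m : ℝ) * ((n : ℝ) / N) ^ 2 +
      (m : ℝ) * ((m : ℝ) - 1) * ((n : ℝ) * N - (n : ℝ) ^ 2) /
        ((N : ℝ) ^ 2 * ((N : ℝ) - 1)) ≤ (1 / C) * SS := by
    rw [← sub_nonneg]
    have expand : (1 / C) * SS - ((m : ℝ) * ((n : ℝ) / N) ^ 2 +
        (m : ℝ) * ((m : ℝ) - 1) * ((n : ℝ) * N - (n : ℝ) ^ 2) /
          ((N : ℝ) ^ 2 * ((N : ℝ) - 1)))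
        = (((N:ℝ) * D - (n:ℝ)^2) * ((m:ℝ) * ((N:ℝ) - (m:ℝ)))) / ((N:ℝ)^2 * ((N:ℝ) - 1)) := by
      have hSSval : SS = (C * ((m:ℝ) * ((N:ℝ) - 1)) * D
          + C * ((m:ℝ) * ((m:ℝ) - 1)) * ((n:ℝ) - D)) / ((N:ℝ) * ((N:ℝ) - 1)) := by
        rw [eq_div_iff (by positivity)]
        linarith [hkey]
      rw [hSSval]
      field_simp
      ring
    rw [expand]
    apply div_nonneg
    · apply mul_nonneg
      · linarith [hDlow]
      · apply mul_nonneg (by linarith) (by linarith)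
    · positivity
  -- Jensen / power mean step
  have hp0 : (0:ℝ) < p := by linarith
  have hp2 : (1:ℝ) ≤ p / 2 := by linarith
  have hw' : ∑ _Λ ∈ P, (1/C : ℝ) = 1 := by
    rw [Finset.sum_const, nsmul_eq_mul, hP, Finset.card_powersetCard, hcard_univ]
    rw [← hCdef]  -- may fail; fallback below
    field_simp
  have hJ := Real.arith_mean_le_rpow_mean P (fun _ => (1/C : ℝ)) S
    (fun i _ => by positivity) hw' (fun Λ _ => hS_nonneg Λ) hp2
  rw [← Finset.mul_sum, ← Finset.mul_sum] at hJ
  set Y : ℝ := (1/C) * ∑ Λ ∈ P, S Λ ^ (p/2) with hY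
  have hY0 : (0:ℝ) ≤ Y := by
    rw [hY]
    apply mul_nonneg (by positivity)
    exact Finset.sum_nonneg fun Λ _ => Real.rpow_nonneg (hS_nonneg Λ) _
  have h2p : 1/(p/2) = 2/p := one_div_div p 2
  show Real.sqrt _ ≤ Y ^ (1/p)
  calc Real.sqrt ((m : ℝ) * ((n : ℝ) / N) ^ 2 +
        (m : ℝ) * ((m : ℝ) - 1) * ((n : ℝ) * N - (n : ℝ) ^ 2) /
          ((N : ℝ) ^ 2 * ((N : ℝ) - 1)))
      ≤ Real.sqrt ((1/C) * SS) := Real.sqrt_le_sqrt havg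
    _ ≤ Real.sqrt (Y ^ (2/p)) := Real.sqrt_le_sqrt (by rw [← h2p]; exact hJ)
    _ = (Y ^ (2/p)) ^ ((1:ℝ)/2) := Real.sqrt_eq_rpow _
    _ = Y ^ ((2/p) * ((1:ℝ)/2)) := (Real.rpow_mul hY0 _ _).symm
    _ = Y ^ (1/p) := by rw [show (2/p) * ((1:ℝ)/2) = 1/p by ring]
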